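/- Let κ have uncountable cofinality, X ⊆ [ω]^ω with X ∪ Fin κ-concentrated on Fin, and φ : X ∪ Fin → [ω]^ω continuous. Then there is A ⊆ X with |A| < κ such that the semifilter generated by φ[(X ∖ A) ∪ Fin] (all b ∈ [ω]^ω almost containing some element of the image) is neither an ultrafilter nor all of [ω]^ω; equivalently, there are disjoint infinite a, b ⊆ ω such that every y in the image meets both a and b infinitely. -/

import Mathlib

open Set Cardinal

/-- The finite subsets of ω, as a subset of Cantor space `ℕ → Bool`. -/
def FinS : Set (ℕ → Bool) := {x | {n | x n = true}.Finite}


lemma slice_finite (n : ℕ) : {x : ℕ → Bool | ∀ k, n ≤ k → x k = false}.Finite := by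
  rw [← Set.finite_coe_iff]
  apply Finite.of_injective (fun x => (fun i : Fin n => x.1 i))
  rintro ⟨x, hx⟩ ⟨y, hy⟩ h
  simp only [Subtype.mk.injEq]
  ext k
  rcases lt_or_ge k n with hk | hk
  · exact congrFun h ⟨k, hk⟩
  · rw [hx k hk, hy k hk]

lemma finS_countable : FinS.Countable := by
  have hsub : FinS ⊆ ⋃ n : ℕ, {x : ℕ → Bool | ∀ k, n ≤ k → x k = false} := by
    intro x hx
    obtain ⟨m, hm⟩ := hx.bddAbove
    refine mem_iUnion.2 ⟨m + 1, fun k hk => ?_⟩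
    by_contra h
    have : x k = true := by simpa using h
    exact absurd (hm this) (by omega)
  exact (Set.countable_iUnion fun n => (slice_finite n).countable).mono hsub

lemma key_lemma (S : Set (ℕ → Bool)) (φ : (ℕ → Bool) → (ℕ → Bool))
    (hφ : ContinuousOn φ S) (s : ℕ → Bool) (hs : s ∈ S)
    (hinf : {k | φ s k = true}.Infinite) (M : ℕ) :
    ∃ k₁ k₂ : ℕ, ∃ V : Set (ℕ → Bool), M < k₁ ∧ k₁ < k₂ ∧ IsOpen V ∧ s ∈ V ∧
      ∀ x ∈ V ∩ S, φ x k₁ = true ∧ φ x k₂ = true := by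
  obtain ⟨k₁, hk₁, hMk₁⟩ := hinf.exists_gt M
  obtain ⟨k₂, hk₂, hk₁k₂⟩ := hinf.exists_gt k₁
  set W : Set (ℕ → Bool) := (fun y => y k₁) ⁻¹' {true} ∩ (fun y => y k₂) ⁻¹' {true} with hWdef
  have hWo : IsOpen W :=
    ((isOpen_discrete _).preimage (continuous_apply k₁)).inter
      ((isOpen_discrete _).preimage (continuous_apply k₂))
  have hmem : W ∈ nhds (φ s) := hWo.mem_nhds ⟨hk₁, hk₂⟩
  have h2 : φ ⁻¹' W ∈ nhdsWithin s S := hφ s hs hmem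
  rw [mem_nhdsWithin] at h2
  obtain ⟨V, hVo, hsV, hV⟩ := h2
  exact ⟨k₁, k₂, V, hMk₁, hk₁k₂, hVo, hsV, fun x hx => hV hx⟩


/-- if `X ∪ Fin` is κ-concentrated on `Fin` (κ of uncountable
cofinality) and `φ : X ∪ Fin → [ω]^ω` is continuous, then for some `A ⊆ X` with
`|A| < κ` there are disjoint infinite `a, b ⊆ ω` such that every member of
`φ[(X ∖ A) ∪ Fin]` meets both `a` and `b` infinitely; in particular the semifilter
generated by the image is neither an ultrafilter nor all of `[ω]^ω`. -/
theorem stmt9 (κ : Cardinal) (hκ : Cardinal.aleph0 < κ.ord.cof)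
    (X : Set (ℕ → Bool)) (hX : ∀ x ∈ X, {n | x n = true}.Infinite)
    (hconc : κ ≤ Cardinal.mk ↥(X ∪ FinS) ∧
      ∀ U : Set (ℕ → Bool), IsOpen U → FinS ⊆ U →
        Cardinal.mk ↥((X ∪ FinS) \ U) < κ)
    (φ : (ℕ → Bool) → (ℕ → Bool)) (hφ : ContinuousOn φ (X ∪ FinS))
    (hrange : ∀ x ∈ X ∪ FinS, {k | φ x k = true}.Infinite) :
    ∃ A ⊆ X, Cardinal.mk A < κ ∧
      ∃ a b : Set ℕ, a.Infinite ∧ b.Infinite ∧ Disjoint a b ∧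
        ∀ x ∈ (X \ A) ∪ FinS,
          ({k | φ x k = true} ∩ a).Infinite ∧ ({k | φ x k = true} ∩ b).Infinite := by
  classical
  set S := X ∪ FinS with hSdef
  -- an enumeration of FinS
  obtain ⟨e, he⟩ := finS_countable.exists_eq_range ⟨fun _ => false, by simp [FinS]⟩
  have heS : ∀ i, e i ∈ S := fun i => Or.inr (by rw [he]; exact mem_range_self i)
  -- choice of picks
  have hkey : ∀ (i M : ℕ), ∃ k₁ k₂ : ℕ, ∃ V : Set (ℕ → Bool),
      M < k₁ ∧ k₁ < k₂ ∧ IsOpen V ∧ e i ∈ V ∧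
      ∀ x ∈ V ∩ S, φ x k₁ = true ∧ φ x k₂ = true :=
    fun i M => key_lemma S φ hφ (e i) (heS i) (hrange _ (heS i)) M
  choose K1 K2 Vc h1 h2 h3 h4 h5 using hkey
  -- stage bounds
  set Mb : ℕ → ℕ := fun t => Nat.rec 0
    (fun t Mt => K2 (Nat.unpair t).1 (max Mt (Nat.unpair t).2)) t with hMb
  set arg : ℕ → ℕ := fun t => max (Mb t) (Nat.unpair t).2 with harg
  set A1 : ℕ → ℕ := fun t => K1 (Nat.unpair t).1 (arg t) with hA1
  set A2 : ℕ → ℕ := fun t => K2 (Nat.unpair t).1 (arg t) with hA2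
  set Vt : ℕ → Set (ℕ → Bool) := fun t => Vc (Nat.unpair t).1 (arg t) with hVt
  have hMbsucc : ∀ t, Mb (t + 1) = A2 t := fun t => rfl
  have hlt1 : ∀ t, Mb t < A1 t := fun t => lt_of_le_of_lt (le_max_left _ _) (h1 _ _)
  have hlt1' : ∀ t, (Nat.unpair t).2 < A1 t :=
    fun t => lt_of_le_of_lt (le_max_right _ _) (h1 _ _)
  have hlt2 : ∀ t, A1 t < A2 t := fun t => h2 _ _
  have hMbmono : StrictMono Mb :=
    strictMono_nat_of_lt_succ fun t => by
      rw [hMbsucc]; exact (hlt1 t).trans (hlt2 t)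
  have horder : ∀ t t', t < t' → A2 t < A1 t' := by
    intro t t' htt
    calc A2 t = Mb (t + 1) := (hMbsucc t).symm
    _ ≤ Mb t' := hMbmono.monotone htt
    _ < A1 t' := hlt1 t'
  have hA1mono : StrictMono A1 := by
    intro t t' htt
    exact (hlt2 t).trans (horder t t' htt)
  have hA2mono : StrictMono A2 := by
    intro t t' htt
    exact (horder t t' htt).trans (hlt2 t')
  set a : Set ℕ := Set.range A1 with ha
  set b : Set ℕ := Set.range A2 with hb
  have hainf : a.Infinite := Set.infinite_range_of_injective hA1mono.injective
  have hbinf : b.Infinite := Set.infinite_range_of_injective hA2mono.injective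
  have hdisj : Disjoint a b := by
    rw [Set.disjoint_left]
    rintro _ ⟨t, rfl⟩ ⟨t', h8⟩
    rcases lt_trichotomy t' t with h | h | h
    · exact (horder t' t h).ne h8
    · subst h; exact (hlt2 t').ne' h8
    · exact ((hlt2 t).trans (hA2mono h)).ne h8.symm
  -- the open sets
  set U : ℕ → Set (ℕ → Bool) := fun n => ⋃ i, Vt (Nat.pair i n) with hU
  have hUopen : ∀ n, IsOpen (U n) := fun n => isOpen_iUnion fun i => h3 _ _
  have hUFin : ∀ n, FinS ⊆ U n := by
    intro n x hx
    rw [he] at hx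
    obtain ⟨i, rfl⟩ := hx
    refine mem_iUnion.2 ⟨i, ?_⟩
    have : (Nat.unpair (Nat.pair i n)).1 = i := by simp
    rw [hVt]
    simp only [Nat.unpair_pair]
    exact h4 i _
  -- points in all U n get infinite intersections
  have hGood : ∀ x ∈ S, x ∈ (⋂ n, U n) →
      ({k | φ x k = true} ∩ a).Infinite ∧ ({k | φ x k = true} ∩ b).Infinite := by
    intro x hxS hxG
    constructor
    · apply Set.infinite_of_forall_exists_gt
      intro n
      have hx : x ∈ U n := mem_iInter.1 hxG n
      obtain ⟨i, hxi⟩ := mem_iUnion.1 hx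
      set t := Nat.pair i n with ht
      have hmem := h5 (Nat.unpair t).1 (arg t) x ⟨hxi, hxS⟩
      refine ⟨A1 t, ⟨hmem.1, ⟨t, rfl⟩⟩, ?_⟩
      have := hlt1' t
      simpa [ht, Nat.unpair_pair] using this
    · apply Set.infinite_of_forall_exists_gt
      intro n
      have hx : x ∈ U n := mem_iInter.1 hxG n
      obtain ⟨i, hxi⟩ := mem_iUnion.1 hx
      set t := Nat.pair i n with ht
      have hmem := h5 (Nat.unpair t).1 (arg t) x ⟨hxi, hxS⟩
      refine ⟨A2 t, ⟨hmem.2, ⟨t, rfl⟩⟩, ?_⟩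
      have : (Nat.unpair t).2 < A2 t := (hlt1' t).trans (hlt2 t)
      simpa [ht, Nat.unpair_pair] using this
  -- the small set A
  refine ⟨X \ ⋂ n, U n, diff_subset, ?_, a, b, hainf, hbinf, hdisj, ?_⟩
  · -- cardinality
    have hsub : (X \ ⋂ n, U n) ⊆ ⋃ n, (S \ U n) := by
      intro x hx
      obtain ⟨hxX, hxG⟩ := hx
      rw [mem_iInter] at hxG
      push_neg at hxG
      obtain ⟨n, hn⟩ := hxG
      exact mem_iUnion.2 ⟨n, Or.inl hxX, hn⟩
    refine lt_of_le_of_lt (Cardinal.mk_le_mk_of_subset hsub) ?_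
    refine lt_of_le_of_lt Cardinal.mk_iUnion_le_sum_mk ?_
    refine lt_of_le_of_lt (Cardinal.sum_le_mk_mul_iSup _) ?_
    have hκ0 : Cardinal.aleph0 ≤ κ := le_trans hκ.le (Ordinal.cof_ord_le κ)
    have hlt : ∀ n, Cardinal.mk ↥(S \ U n) < κ :=
      fun n => hconc.2 (U n) (hUopen n) (hUFin n)
    have hsup : (⨆ n, Cardinal.mk ↥(S \ U n)) < κ :=
      Ordinal.iSup_lt (by rwa [Cardinal.mk_nat]) hlt
    rw [Cardinal.mk_nat]
    exact Cardinal.mul_lt_of_lt hκ0 (lt_of_lt_of_le hκ (Ordinal.cof_ord_le κ)) hsup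
  · -- main property
    rintro x (⟨hxX, hxA⟩ | hxF)
    · have hxG : x ∈ ⋂ n, U n := by
        by_contra h
        exact hxA ⟨hxX, h⟩
      exact hGood x (Or.inl hxX) hxG
    · exact hGood x (Or.inr hxF) (mem_iInter.2 fun n => hUFin n hxF)
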